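/- Let f be real-analytic near its simple root α and let A be a real-valued function that is real-analytic (in particular twice continuously differentiable) in a neighborhood of 1 with A(1) = 1 and A'(1) = -1/2. Define, for x near α with f'(x) ≠ 0, the iteration map F(x) = x - A(f'(y(x))/f'(x)) · f(x)/f'(x), where y(x) = x - f(x)/f'(x). Then the method is of third order; more precisely, as x → α, F(x) - α = (1/2)·[c₃ - 4 c₂² (A''(1) - 1)]·(x - α)³ + O((x - α)⁴). -/

import Mathlib

open Filter Asymptotics

lemma analytic_taylor (g : ℝ → ℝ) (x₀ : ℝ) (hg : AnalyticAt ℝ g x₀) (n : ℕ) :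
    (fun x => g x - ∑ k ∈ Finset.range n, (iteratedDeriv k g x₀ / (k.factorial : ℝ)) * (x - x₀)^k)
      =O[nhds x₀] fun x => (x - x₀)^n := by
  obtain ⟨p, hp⟩ := hg
  obtain ⟨r, hpr⟩ := id hp
  have hcoeff : ∀ k, p.coeff k = iteratedDeriv k g x₀ / (k.factorial : ℝ) := by
    intro k
    have h1 := hpr.factorial_smul (1 : ℝ) k
    rw [FormalMultilinearSeries.apply_eq_pow_smul_coeff, one_pow, one_smul] at h1
    have h2 : iteratedDeriv k g x₀ = iteratedFDeriv ℝ k g x₀ (fun _ => 1) := by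
      rw [iteratedDeriv]
    rw [← h2] at h1
    field_simp [← h1, Nat.factorial_ne_zero]
    rw [← h1, nsmul_eq_mul]; ring
  have hO := hp.isBigO_sub_partialSum_pow n
  have ht : Tendsto (fun x : ℝ => x - x₀) (nhds x₀) (nhds 0) := by
    have := Filter.Tendsto.sub_const (tendsto_id (x := nhds x₀)) x₀; simpa using this
  have := hO.comp_tendsto ht
  simp only [Function.comp_def] at this
  have heq : ∀ x : ℝ, g (x₀ + (x - x₀)) - p.partialSum n (x - x₀)
      = g x - ∑ k ∈ Finset.range n, (iteratedDeriv k g x₀ / (k.factorial : ℝ)) * (x - x₀)^k := by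
    intro x
    rw [add_sub_cancel]
    congr 1
    rw [FormalMultilinearSeries.partialSum]
    refine Finset.sum_congr rfl fun k _ => ?_
    rw [FormalMultilinearSeries.apply_eq_pow_smul_coeff, hcoeff, smul_eq_mul]
    ring
  calc (fun x => g x - ∑ k ∈ Finset.range n, (iteratedDeriv k g x₀ / (k.factorial : ℝ)) * (x - x₀)^k)
      = fun x => g (x₀ + (x - x₀)) - p.partialSum n (x - x₀) := by ext x; rw [heq]
    _ =O[nhds x₀] fun x => ‖x - x₀‖^n := this
    _ =O[nhds x₀] fun x => (x - x₀)^n := by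
        apply IsBigO.of_bound 1
        filter_upwards with x
        simp [abs_pow]

lemma tw_mulO (α : ℝ) {g : ℝ → ℝ} (hg : ContinuousAt g α) (n : ℕ) :
    (fun x => (x - α)^n * g x) =O[nhds α] fun x => (x - α)^n := by
  have h1 : (fun x : ℝ => (x - α)^n * g x) =O[nhds α] (fun x => (x - α)^n * 1) :=
    (isBigO_refl (fun x : ℝ => (x - α)^n) _).mul (hg.tendsto.isBigO_one (F := ℝ))
  simpa using h1

lemma tw_EpowO (α : ℝ) {m n : ℕ} (h : m ≤ n) :
    (fun x : ℝ => (x - α)^n) =O[nhds α] fun x => (x - α)^m := by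
  have h1 := tw_mulO α (g := fun x => (x - α)^(n - m)) (by fun_prop) m
  exact h1.congr (fun x => by rw [← pow_add, Nat.add_sub_cancel' h]) (fun x => rfl)

lemma tw_Etendsto (α : ℝ) (n : ℕ) (hn : n ≠ 0) :
    Tendsto (fun x : ℝ => (x - α)^n) (nhds α) (nhds 0) := by
  have hc : Continuous fun x : ℝ => (x - α)^n := by fun_prop
  have := hc.tendsto α
  simpa [sub_self, zero_pow hn] using this

/-- The weighted Newton method `F(x) = x - A(f'(y)/f'(x))·f(x)/f'(x)` with
`y(x) = x - f(x)/f'(x)`, where `A` is analytic at `1` with `A(1) = 1` and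
`A'(1) = -1/2`, is of third order:
`F(x) - α = (1/2)·(c₃ - 4c₂²(A''(1) - 1))·(x - α)³ + O((x - α)⁴)` as `x → α`. -/
theorem third_order_weighted_newton
    (f A : ℝ → ℝ) (α : ℝ)
    (hf : AnalyticAt ℝ f α) (hroot : f α = 0) (hder : deriv f α ≠ 0)
    (hA : AnalyticAt ℝ A 1) (hA1 : A 1 = 1) (hA1' : deriv A 1 = -(1/2)) :
    let c₂ := iteratedDeriv 2 f α / ((Nat.factorial 2 : ℝ) * deriv f α)
    let c₃ := iteratedDeriv 3 f α / ((Nat.factorial 3 : ℝ) * deriv f α)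
    let y : ℝ → ℝ := fun x => x - f x / deriv f x
    let F : ℝ → ℝ := fun x => x - A (deriv f (y x) / deriv f x) * (f x / deriv f x)
    (fun x => F x - α - (1/2) * (c₃ - 4 * c₂^2 * (iteratedDeriv 2 A 1 - 1)) * (x - α)^3)
      =O[nhds α] (fun x => (x - α)^4) := by
  intro c₂ c₃ y F
  have hy_def : y = fun x => x - f x / deriv f x := rfl
  have hF_def : F = fun x => x - A (deriv f (y x) / deriv f x) * (f x / deriv f x) := rfl
  set d : ℝ := deriv f α with hd_eq
  set A₂ : ℝ := iteratedDeriv 2 A 1 with hA2_eq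
  -- iterated derivative values for f
  have hi0 : iteratedDeriv 0 f α = 0 := by simpa [iteratedDeriv_zero] using hroot
  have hi1 : iteratedDeriv 1 f α = d := by rw [iteratedDeriv_one, hd_eq]
  have hc2 : iteratedDeriv 2 f α = 2 * d * c₂ := by
    have e : c₂ = iteratedDeriv 2 f α / ((Nat.factorial 2 : ℝ) * d) := rfl
    rw [e]
    field_simp [Nat.factorial]
    ring
  have hc3 : iteratedDeriv 3 f α = 6 * d * c₃ := by
    have e : c₃ = iteratedDeriv 3 f α / ((Nat.factorial 3 : ℝ) * d) := rfl
    rw [e]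
    field_simp [Nat.factorial]
    ring
  -- iterated derivative values for deriv f
  have h21 : iteratedDeriv 2 f = iteratedDeriv 1 (deriv f) := iteratedDeriv_succ'
  have h32 : iteratedDeriv 3 f = iteratedDeriv 2 (deriv f) := iteratedDeriv_succ'
  have hj0 : iteratedDeriv 0 (deriv f) α = d := by rw [iteratedDeriv_zero, hd_eq]
  have hj1 : iteratedDeriv 1 (deriv f) α = 2 * d * c₂ := by rw [← h21]; exact hc2
  have hj2 : iteratedDeriv 2 (deriv f) α = 6 * d * c₃ := by rw [← h32]; exact hc3
  -- iterated derivative values for A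
  have hk0 : iteratedDeriv 0 A 1 = 1 := by simpa [iteratedDeriv_zero] using hA1
  have hk1 : iteratedDeriv 1 A 1 = -(1/2) := by rw [iteratedDeriv_one]; exact hA1'
  -- analyticity / continuity facts
  have hfd : AnalyticAt ℝ (deriv f) α := by
    have h1 : AnalyticAt ℝ (fderiv ℝ f) α := hf.fderiv
    have h2 : AnalyticAt ℝ (fun L : ℝ →L[ℝ] ℝ => L 1) (fderiv ℝ f α) :=
      (ContinuousLinearMap.apply ℝ ℝ (1:ℝ)).analyticAt _
    have h3 := h2.comp h1
    have h4 : deriv f = fun z => fderiv ℝ f z 1 := by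
      ext z; rw [← fderiv_apply_one_eq_deriv]
    rw [h4]; exact h3
  have hdc : ContinuousAt (deriv f) α := hfd.continuousAt
  have htd : Tendsto (deriv f) (nhds α) (nhds d) := by rw [hd_eq]; exact hdc.tendsto
  have hne : ∀ᶠ x in nhds α, deriv f x ≠ 0 := hdc.eventually_ne (by rw [← hd_eq]; exact hder)
  have hinv : Tendsto (fun x => (deriv f x)⁻¹) (nhds α) (nhds d⁻¹) := htd.inv₀ hder
  have hinvO : (fun x => (deriv f x)⁻¹) =O[nhds α] (fun _ : ℝ => (1:ℝ)) := hinv.isBigO_one (F := ℝ)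
  -- polynomial approximants
  set Pf : ℝ → ℝ := fun x => d*(x-α) + d*c₂*(x-α)^2 + d*c₃*(x-α)^3 with hPf
  set Qf : ℝ → ℝ := fun x => d + 2*d*c₂*(x-α) + 3*d*c₃*(x-α)^2 with hQf
  set Q2 : ℝ → ℝ := fun x => d + 2*d*c₂*(x-α) with hQ2
  set Pu : ℝ → ℝ := fun x => (x-α) - c₂*(x-α)^2 + (2*c₂^2-2*c₃)*(x-α)^3 with hPu
  set Py : ℝ → ℝ := fun x => c₂*(x-α)^2 + (2*c₃-2*c₂^2)*(x-α)^3 with hPy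
  set Pn : ℝ → ℝ := fun x => d + 2*d*c₂^2*(x-α)^2 + (4*d*c₂*c₃-4*d*c₂^3)*(x-α)^3 with hPn
  set t : ℝ → ℝ := fun x => 1 - 2*c₂*(x-α) + (6*c₂^2-3*c₃)*(x-α)^2 with ht
  set SA : ℝ → ℝ := fun x => 1 + c₂*(x-α) + (3*c₃/2 + (2*A₂-3)*c₂^2)*(x-α)^2 with hSA
  -- Taylor expansions
  have hTf : (fun x => f x - Pf x) =O[nhds α] fun x => (x-α)^4 := by
    refine (analytic_taylor f α hf 4).congr (fun x => ?_) (fun x => rfl)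
    simp only [Finset.sum_range_succ, Finset.sum_range_zero, hi0, hi1, hc2, hc3, hPf,
      Nat.factorial]
    push_cast
    ring
  have hTf3 : (fun x => deriv f x - Qf x) =O[nhds α] fun x => (x-α)^3 := by
    refine (analytic_taylor (deriv f) α hfd 3).congr (fun x => ?_) (fun x => rfl)
    simp only [Finset.sum_range_succ, Finset.sum_range_zero, hj0, hj1, hj2, hQf,
      Nat.factorial]
    push_cast
    ring
  have hTf2 : (fun x => deriv f x - Q2 x) =O[nhds α] fun x => (x-α)^2 := by
    refine (analytic_taylor (deriv f) α hfd 2).congr (fun x => ?_) (fun x => rfl)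
    simp only [Finset.sum_range_succ, Finset.sum_range_zero, hj0, hj1, hQ2,
      Nat.factorial]
    push_cast
    ring
  -- u := f/f' expansion
  have hPuO : Pu =O[nhds α] fun x => (x - α)^1 := by
    have h1 := tw_mulO α (g := fun x => 1 - c₂*(x-α) + (2*c₂^2-2*c₃)*(x-α)^2) (by fun_prop) 1
    exact h1.congr (fun x => by simp only [hPu]; ring) (fun x => rfl)
  have hstepA : (fun x => f x - Pu x * deriv f x) =O[nhds α] fun x => (x - α)^4 := by
    have t2 : (fun x => Pu x * (deriv f x - Qf x)) =O[nhds α] fun x => (x-α)^4 := by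
      have := hPuO.mul hTf3
      exact this.congr (fun x => rfl) (fun x => by ring)
    have t3 : (fun x => Pu x * Qf x - Pf x) =O[nhds α] fun x => (x-α)^4 := by
      have h1 := tw_mulO α
        (g := fun x => d*(4*c₂^3-7*c₂*c₃) + d*(6*c₂^2*c₃-6*c₃^2)*(x-α)) (by fun_prop) 4
      exact h1.congr (fun x => by simp only [hPu, hQf, hPf]; ring) (fun x => rfl)
    have := (hTf.sub t2).sub t3
    exact this.congr (fun x => by ring) (fun x => rfl)
  have hu : (fun x => f x / deriv f x - Pu x) =O[nhds α] fun x => (x-α)^4 := by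
    have h := hstepA.mul hinvO
    refine h.congr' ?_ (by filter_upwards with x; simp)
    filter_upwards [hne] with x hx
    field_simp
  -- y expansion
  have hy4 : (fun x => y x - α - Py x) =O[nhds α] fun x => (x-α)^4 := by
    refine hu.neg_left.congr (fun x => ?_) (fun x => rfl)
    simp only [hy_def, hPu, hPy]; ring
  have hPyO : Py =O[nhds α] fun x => (x-α)^2 := by
    have h1 := tw_mulO α (g := fun x => c₂ + (2*c₃-2*c₂^2)*(x-α)) (by fun_prop) 2
    exact h1.congr (fun x => by simp only [hPy]; ring) (fun x => rfl)
  have hyO2 : (fun x => y x - α) =O[nhds α] fun x => (x-α)^2 := by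
    have := (hy4.trans (tw_EpowO α (by norm_num))).add hPyO
    exact this.congr (fun x => by ring) (fun x => rfl)
  have hyt : Tendsto y (nhds α) (nhds α) := by
    have h0 : Tendsto (fun x => y x - α) (nhds α) (nhds 0) :=
      hyO2.trans_tendsto (tw_Etendsto α 2 (by norm_num))
    have := h0.add_const α
    simpa using this
  -- f'(y) expansion
  have hyE4 : (fun x => (y x - α)^2) =O[nhds α] fun x => (x-α)^4 := by
    have := hyO2.pow 2
    exact this.congr (fun x => rfl) (fun x => by ring)
  have hNa : (fun x => deriv f (y x) - Q2 (y x)) =O[nhds α] fun x => (x-α)^4 :=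
    (hTf2.comp_tendsto hyt).trans hyE4
  have hN : (fun x => deriv f (y x) - Pn x) =O[nhds α] fun x => (x-α)^4 := by
    have hlin : (fun x => 2*d*c₂*(y x - α - Py x)) =O[nhds α] fun x => (x-α)^4 :=
      hy4.const_mul_left _
    have := hNa.add hlin
    refine this.congr (fun x => ?_) (fun x => rfl)
    simp only [hQ2, hPn, hPy]; ring
  -- r := f'(y)/f' expansion
  have htO1 : t =O[nhds α] (fun _ : ℝ => (1:ℝ)) := by
    have hct : Continuous t := by rw [ht]; fun_prop
    exact (hct.tendsto α).isBigO_one (F := ℝ)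
  have hstepC : (fun x => deriv f (y x) - t x * deriv f x) =O[nhds α] fun x => (x-α)^3 := by
    have t1 : (fun x => deriv f (y x) - Pn x) =O[nhds α] fun x => (x-α)^3 :=
      hN.trans (tw_EpowO α (by norm_num))
    have t2 : (fun x => t x * (deriv f x - Qf x)) =O[nhds α] fun x => (x-α)^3 := by
      have := htO1.mul hTf3
      exact this.congr (fun x => rfl) (fun x => by ring)
    have t3 : (fun x => t x * Qf x - Pn x) =O[nhds α] fun x => (x-α)^3 := by
      have h1 := tw_mulO α
        (g := fun x => d*(16*c₂^3 - 16*c₂*c₃) + d*(18*c₂^2*c₃ - 9*c₃^2)*(x-α)) (by fun_prop) 3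
      exact h1.congr (fun x => by simp only [ht, hQf, hPn]; ring) (fun x => rfl)
    have := (t1.sub t2).sub t3
    exact this.congr (fun x => by ring) (fun x => rfl)
  have hr3 : (fun x => deriv f (y x) / deriv f x - t x) =O[nhds α] fun x => (x-α)^3 := by
    have h := hstepC.mul hinvO
    refine h.congr' ?_ (by filter_upwards with x; simp)
    filter_upwards [hne] with x hx
    field_simp
  have htt : Tendsto t (nhds α) (nhds 1) := by
    have hct : Continuous t := by rw [ht]; fun_prop
    have := hct.tendsto α
    simpa [ht] using this
  have hrt : Tendsto (fun x => deriv f (y x) / deriv f x) (nhds α) (nhds 1) := by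
    have h0 : Tendsto (fun x => deriv f (y x) / deriv f x - t x) (nhds α) (nhds 0) :=
      hr3.trans_tendsto (tw_Etendsto α 3 (by norm_num))
    have := h0.add htt
    simpa using this
  -- Taylor of A at 1, composed with r
  have hTA : (fun s => A s - (1 + (-(1/2))*(s-1) + (A₂/2)*(s-1)^2)) =O[nhds 1]
      fun s => (s-1)^3 := by
    refine (analytic_taylor A 1 hA 3).congr (fun s => ?_) (fun s => rfl)
    simp only [Finset.sum_range_succ, Finset.sum_range_zero, hk0, hk1, ← hA2_eq,
      Nat.factorial]
    push_cast
    ring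
  have hAr0 : (fun x => A (deriv f (y x) / deriv f x) -
      (1 + (-(1/2))*(deriv f (y x) / deriv f x - 1) +
        (A₂/2)*(deriv f (y x) / deriv f x - 1)^2)) =O[nhds α]
      fun x => (deriv f (y x) / deriv f x - 1)^3 := hTA.comp_tendsto hrt
  have hr1 : (fun x => deriv f (y x) / deriv f x - 1) =O[nhds α] fun x => (x-α)^1 := by
    have ht1 : (fun x => t x - 1) =O[nhds α] fun x => (x-α)^1 := by
      have h1 := tw_mulO α (g := fun x => -2*c₂ + (6*c₂^2-3*c₃)*(x-α)) (by fun_prop) 1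
      exact h1.congr (fun x => by simp only [ht]; ring) (fun x => rfl)
    have := (hr3.trans (tw_EpowO α (by norm_num))).add ht1
    exact this.congr (fun x => by ring) (fun x => rfl)
  have hr1cube : (fun x => (deriv f (y x) / deriv f x - 1)^3) =O[nhds α]
      fun x => (x-α)^3 := by
    have := hr1.pow 3
    exact this.congr (fun x => rfl) (fun x => by ring)
  have hAr1 : (fun x => A (deriv f (y x) / deriv f x) -
      (1 + (-(1/2))*(deriv f (y x) / deriv f x - 1) +
        (A₂/2)*(deriv f (y x) / deriv f x - 1)^2)) =O[nhds α] fun x => (x-α)^3 :=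
    hAr0.trans hr1cube
  have hrlin : (fun x => (deriv f (y x) / deriv f x - 1) - (t x - 1)) =O[nhds α]
      fun x => (x-α)^3 := hr3.congr (fun x => by ring) (fun x => rfl)
  have hrsq : (fun x => (deriv f (y x) / deriv f x - 1)^2 - 4*c₂^2*(x-α)^2) =O[nhds α]
      fun x => (x-α)^3 := by
    have hbound : (fun x => (deriv f (y x) / deriv f x - 1) + (t x - 1)) =O[nhds α]
        (fun _ : ℝ => (1:ℝ)) := by
      have h1 : Tendsto (fun x => (deriv f (y x) / deriv f x - 1) + (t x - 1)) (nhds α)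
          (nhds 0) := by
        have := (hrt.sub_const 1).add (htt.sub_const 1)
        simpa using this
      exact h1.isBigO_one (F := ℝ)
    have part1 : (fun x => (deriv f (y x) / deriv f x - 1)^2 - (t x - 1)^2) =O[nhds α]
        fun x => (x-α)^3 := by
      have := hr3.mul hbound
      exact this.congr (fun x => by ring) (fun x => by simp)
    have part2 : (fun x => (t x - 1)^2 - 4*c₂^2*(x-α)^2) =O[nhds α] fun x => (x-α)^3 := by
      have h1 := tw_mulO α
        (g := fun x => -4*c₂*(6*c₂^2-3*c₃) + (6*c₂^2-3*c₃)^2*(x-α)) (by fun_prop) 3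
      exact h1.congr (fun x => by simp only [ht]; ring) (fun x => rfl)
    have := part1.add part2
    exact this.congr (fun x => by ring) (fun x => rfl)
  have hAr : (fun x => A (deriv f (y x) / deriv f x) - SA x) =O[nhds α]
      fun x => (x-α)^3 := by
    have := (hAr1.sub (hrlin.const_mul_left (1/2))).add (hrsq.const_mul_left (A₂/2))
    refine this.congr (fun x => ?_) (fun x => rfl)
    simp only [ht, hSA]; ring
  -- final combination
  have huO : (fun x => f x / deriv f x) =O[nhds α] fun x => (x-α)^1 := by
    have := (hu.trans (tw_EpowO α (by norm_num))).add hPuO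
    exact this.congr (fun x => by ring) (fun x => rfl)
  have hSAO1 : SA =O[nhds α] (fun _ : ℝ => (1:ℝ)) := by
    have hct : Continuous SA := by rw [hSA]; fun_prop
    exact (hct.tendsto α).isBigO_one (F := ℝ)
  have hprod : (fun x => A (deriv f (y x) / deriv f x) * (f x / deriv f x) - SA x * Pu x)
      =O[nhds α] fun x => (x-α)^4 := by
    have p1 : (fun x => (A (deriv f (y x) / deriv f x) - SA x) * (f x / deriv f x))
        =O[nhds α] fun x => (x-α)^4 := by
      have := hAr.mul huO
      exact this.congr (fun x => rfl) (fun x => by ring)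
    have p2 : (fun x => SA x * (f x / deriv f x - Pu x)) =O[nhds α] fun x => (x-α)^4 := by
      have := hSAO1.mul hu
      exact this.congr (fun x => rfl) (fun x => by simp)
    have := p1.add p2
    exact this.congr (fun x => by ring) (fun x => rfl)
  have hres : (fun x => SA x * Pu x -
      ((x-α) - (1/2) * (c₃ - 4 * c₂^2 * (A₂ - 1)) * (x-α)^3)) =O[nhds α]
      fun x => (x-α)^4 := by
    have h1 := tw_mulO α
      (g := fun x => c₂*(5*c₂^2 - 7/2*c₃ - 2*A₂*c₂^2) +
        ((3*c₃/2 + (2*A₂-3)*c₂^2)*(2*c₂^2-2*c₃))*(x-α)) (by fun_prop) 4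
    exact h1.congr (fun x => by simp only [hSA, hPu]; ring) (fun x => rfl)
  have := (hprod.add hres).neg_left
  refine this.congr (fun x => ?_) (fun x => rfl)
  simp only [hF_def]; ring
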